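/- Let P be the probability measure on ℝ with density (3/2)^n on J_n = [1 - 1/3^(n-1), 1 - 2/3^n] for n ≥ 1. Then ∫ min((x - 1/6)^2, (x - 5/6)^2) dP = 7/612. Moreover, for every two-point set {a₁, a₂} ⊂ ℝ, ∫ min((x - a₁)^2, (x - a₂)^2) dP ≥ 7/612, so {1/6, 5/6} is an optimal set of two-means with quantization error V₂ = 7/612. -/

import Mathlib

open MeasureTheory Set

/-- The interval `J n = [1 - 1/3^(n-1), 1 - 2/3^n]`. -/
noncomputable def J (n : ℕ) : Set ℝ := Set.Icc (1 - 1 / 3 ^ (n - 1)) (1 - 2 / 3 ^ n)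

/-- The piecewise constant density: `(3/2)^n` on `J n` for `n ≥ 1`, `0` elsewhere. -/
noncomputable def f (x : ℝ) : ℝ :=
  ∑' n : ℕ, Set.indicator (J (n + 1)) (fun _ => ((3 : ℝ) / 2) ^ (n + 1)) x

/-- The piecewise uniform probability measure on `ℝ` with density `f`. -/
noncomputable def P : Measure ℝ :=
  MeasureTheory.volume.withDensity (fun x => ENNReal.ofReal (f x))

open scoped ENNReal

lemma J_succ (n : ℕ) : J (n+1) = Set.Icc (1 - 1 / (3:ℝ) ^ n) (1 - 2 / 3 ^ (n+1)) := rfl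

lemma pow3_pos (n : ℕ) : (0:ℝ) < 3 ^ n := by positivity

lemma pow3_mono {a b : ℕ} (h : a ≤ b) : (3:ℝ)^a ≤ 3^b :=
  pow_le_pow_right₀ (by norm_num) h

lemma J_le (n : ℕ) : (1 - 1 / (3:ℝ) ^ n) ≤ (1 - 2 / 3 ^ (n+1)) := by
  have h := pow3_pos n
  rw [sub_le_sub_iff_left, pow_succ, div_le_div_iff₀ (by positivity) h]
  nlinarith

lemma one_div_pow3_le_one (n : ℕ) : (1:ℝ)/3^n ≤ 1 := by
  rw [div_le_one (pow3_pos n)]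
  exact one_le_pow₀ (by norm_num)

lemma J_subset_Icc (n : ℕ) : J (n+1) ⊆ Set.Icc (0:ℝ) 1 := by
  rw [J_succ]
  apply Set.Icc_subset_Icc
  · have := one_div_pow3_le_one n; linarith
  · have h := pow3_pos (n+1)
    have : (0:ℝ) < 2/3^(n+1) := by positivity
    linarith

lemma J_subset_U (n : ℕ) : J (n+1) ⊆ Set.Icc (0:ℝ) (1/3) ∪ Set.Icc (2/3) 1 := by
  match n with
  | 0 =>
    intro x hx
    rw [J_succ] at hx
    left
    refine ⟨?_, ?_⟩ <;> [skip; skip] <;>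
      · have h1 := hx.1; have h2 := hx.2; norm_num at h1 h2 ⊢ <;> linarith
  | (m+1) =>
    intro x hx
    right
    have h2 := J_subset_Icc (m+1) hx
    rw [J_succ] at hx
    refine ⟨?_, h2.2⟩
    have h3 : (3:ℝ) ≤ 3^(m+1) := by simpa using pow3_mono (show 1 ≤ m+1 by omega)
    have h4 : (1:ℝ)/3^(m+1) ≤ 1/3 := by
      rw [div_le_div_iff₀ (pow3_pos _) (by norm_num)]; linarith
    have := hx.1
    linarith

lemma J_disjoint {n m : ℕ} (h : n ≠ m) (x : ℝ) (hn : x ∈ J (n+1)) (hm : x ∈ J (m+1)) : False := by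
  have key : ∀ a b : ℕ, a < b → ∀ y : ℝ, y ∈ J (a+1) → y ∈ J (b+1) → False := by
    intro a b hab y hya hyb
    rw [J_succ] at hya hyb
    have h1 : (1:ℝ)/3^b ≤ 1/3^(a+1) :=
      div_le_div_of_nonneg_left (by norm_num) (pow3_pos _) (pow3_mono (by omega))
    have h2 : (1:ℝ)/3^(a+1) < 2/3^(a+1) := by
      have := pow3_pos (a+1)
      rw [div_lt_div_iff₀ this this]; nlinarith
    have := hya.2; have := hyb.1
    linarith
  rcases Nat.lt_or_ge n m with h1 | h1
  · exact key n m h1 x hn hm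
  · exact key m n (by omega) x hm hn

lemma measurableSet_J (n : ℕ) : MeasurableSet (J n) := by
  unfold J; exact measurableSet_Icc

lemma ofReal_f_eq (x : ℝ) :
    ENNReal.ofReal (f x)
      = ∑' n : ℕ, Set.indicator (J (n+1)) (fun _ => ENNReal.ofReal (((3:ℝ)/2) ^ (n+1))) x := by
  by_cases h : ∃ n : ℕ, x ∈ J (n+1)
  · obtain ⟨N, hN⟩ := h
    have hf : f x = ((3:ℝ)/2) ^ (N+1) := by
      unfold f
      rw [tsum_eq_single N]
      · rw [Set.indicator_of_mem hN]
      · intro b hb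
        rw [Set.indicator_of_notMem]
        intro hx; exact J_disjoint hb x hx hN
    rw [hf, tsum_eq_single N]
    · rw [Set.indicator_of_mem hN]
    · intro b hb
      rw [Set.indicator_of_notMem]
      intro hx; exact J_disjoint hb x hx hN
  · push_neg at h
    have hf : f x = 0 := by
      unfold f
      convert tsum_zero with n
      exact Set.indicator_of_notMem (h n) _
    rw [hf]
    rw [ENNReal.ofReal_zero]
    symm
    convert tsum_zero with n
    exact Set.indicator_of_notMem (h n) _

lemma P_eq : P = Measure.sum (fun n : ℕ =>
    (ENNReal.ofReal (((3:ℝ)/2) ^ (n+1))) • volume.restrict (J (n+1))) := by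
  have h1 : (fun x => ENNReal.ofReal (f x))
      = ∑' n : ℕ, (Set.indicator (J (n+1)) (fun _ => ENNReal.ofReal (((3:ℝ)/2) ^ (n+1)))) := by
    funext x
    rw [ofReal_f_eq]
    exact (tsum_apply (Pi.summable.2 fun _ => ENNReal.summable)).symm
  rw [P, h1, withDensity_tsum (fun i => Measurable.indicator measurable_const (measurableSet_J _))]
  congr 1
  funext n
  rw [withDensity_indicator (measurableSet_J _), withDensity_const]

lemma volume_J (n : ℕ) : volume (J (n+1)) = ENNReal.ofReal ((1/3:ℝ)^(n+1)) := by
  rw [J_succ, Real.volume_Icc]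
  congr 1
  have := pow3_pos n
  have := pow3_pos (n+1)
  rw [div_pow, one_pow, pow_succ]
  field_simp
  ring

lemma P_apply_J_aux (n : ℕ) :
    (ENNReal.ofReal (((3:ℝ)/2) ^ (n+1))) * volume (J (n+1)) = ENNReal.ofReal ((1/2:ℝ)^(n+1)) := by
  rw [volume_J, ← ENNReal.ofReal_mul (by positivity)]
  congr 1
  rw [← mul_pow]
  norm_num

instance P_prob : IsProbabilityMeasure P := by
  constructor
  rw [P_eq, Measure.sum_apply _ MeasurableSet.univ]
  have h1 : ∀ n : ℕ, ((ENNReal.ofReal (((3:ℝ)/2) ^ (n+1))) • volume.restrict (J (n+1))) Set.univ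
      = ENNReal.ofReal ((1/2:ℝ)^(n+1)) := by
    intro n
    rw [Measure.smul_apply, smul_eq_mul, Measure.restrict_apply MeasurableSet.univ,
      Set.univ_inter, P_apply_J_aux]
  rw [tsum_congr h1]
  have h2 : ∀ n : ℕ, ENNReal.ofReal ((1/2:ℝ)^(n+1)) = 2⁻¹ * (2⁻¹:ℝ≥0∞) ^ n := by
    intro n
    rw [ENNReal.ofReal_pow (by norm_num), pow_succ']
    rw [show (1/2:ℝ) = (2:ℝ)⁻¹ by norm_num,
      ENNReal.ofReal_inv_of_pos (by norm_num : (0:ℝ) < 2), ENNReal.ofReal_ofNat]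
  rw [tsum_congr h2, ENNReal.tsum_mul_left, ENNReal.tsum_geometric,
    ENNReal.one_sub_inv_two, inv_inv]
  exact ENNReal.inv_mul_cancel (by norm_num) (by norm_num)

lemma P_ae_U : ∀ᵐ x ∂P, x ∈ Set.Icc (0:ℝ) (1/3) ∪ Set.Icc (2/3) 1 := by
  set U := Set.Icc (0:ℝ) (1/3) ∪ Set.Icc (2/3) 1 with hUdef
  have hU : MeasurableSet U := measurableSet_Icc.union measurableSet_Icc
  rw [ae_iff]
  have hc : MeasurableSet {a : ℝ | ¬ a ∈ U} := hU.compl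
  rw [P_eq, Measure.sum_apply _ hc]
  convert tsum_zero with n
  rw [Measure.smul_apply, smul_eq_mul, Measure.restrict_apply hc]
  have he : {a : ℝ | ¬ a ∈ U} ∩ J (n+1) = ∅ := by
    ext x
    simp only [Set.mem_inter_iff, Set.mem_setOf_eq, Set.mem_empty_iff_false, iff_false]
    rintro ⟨hx1, hx2⟩
    exact hx1 (J_subset_U n hx2)
  rw [he]
  simp

lemma integrable_P {g : ℝ → ℝ} (hg : Measurable g) {C : ℝ}
    (hC : ∀ x ∈ Set.Icc (0:ℝ) 1, |g x| ≤ C) : Integrable g P := by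
  apply Integrable.mono' (integrable_const C) hg.aestronglyMeasurable
  filter_upwards [P_ae_U] with x hx
  rw [Real.norm_eq_abs]
  apply hC
  rcases hx with h | h
  · exact ⟨h.1, le_trans h.2 (by norm_num)⟩
  · exact ⟨le_trans (by norm_num) h.1, h.2⟩

lemma hasSum_P (g : ℝ → ℝ) (hg : Measurable g) (C : ℝ)
    (hC : ∀ x ∈ Set.Icc (0:ℝ) 1, |g x| ≤ C) :
    HasSum (fun n : ℕ => ((3:ℝ)/2)^(n+1) * ∫ x in J (n+1), g x) (∫ x, g x ∂P) := by
  have hint : Integrable g (Measure.sum (fun n : ℕ =>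
      (ENNReal.ofReal (((3:ℝ)/2) ^ (n+1))) • volume.restrict (J (n+1)))) := by
    rw [← P_eq]; exact integrable_P hg hC
  have h := hasSum_integral_measure hint
  rw [← P_eq] at h
  convert h using 2 with n
  case e'_3 => rfl
  rw [integral_smul_measure, ENNReal.toReal_ofReal (by positivity), smul_eq_mul]

lemma setInt_Icc {a b : ℝ} (h : a ≤ b) (g : ℝ → ℝ) :
    ∫ x in Set.Icc a b, g x = ∫ x in a..b, g x := by
  rw [intervalIntegral.integral_of_le h, integral_Icc_eq_integral_Ioc]

lemma int_sq (a b c : ℝ) : ∫ x in a..b, (x - c)^2 = ((b-c)^3 - (a-c)^3)/3 := by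
  have h := intervalIntegral.integral_comp_sub_right (fun y => y^2) c (a := a) (b := b)
  rw [h, integral_pow]
  norm_num

lemma int_id (a b : ℝ) : ∫ x in a..b, x = (b^2 - a^2)/2 := by
  have := integral_pow (a := a) (b := b) 1
  simpa using this

lemma int_one (a b : ℝ) : ∫ x in a..b, (1:ℝ) = b - a := by simp

/-- geometric sums -/
lemma hs_half : HasSum (fun n : ℕ => ((1:ℝ)/2)^(n+1)) 1 := by
  have h := (hasSum_geometric_of_lt_one (by norm_num : (0:ℝ) ≤ 1/2) (by norm_num)).mul_right (1/2)
  simp_rw [← pow_succ] at h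
  convert h using 1
  case e'_3 => rfl
  norm_num

lemma hs_sixth : HasSum (fun n : ℕ => ((1:ℝ)/6)^n) (6/5) := by
  have h := hasSum_geometric_of_lt_one (by norm_num : (0:ℝ) ≤ 1/6) (by norm_num)
  convert h using 1
  norm_num

lemma hs_18 : HasSum (fun n : ℕ => ((1:ℝ)/18)^n) (18/17) := by
  have h := hasSum_geometric_of_lt_one (by norm_num : (0:ℝ) ≤ 1/18) (by norm_num)
  convert h using 1
  norm_num

lemma E0 : ∫ x, (1:ℝ) ∂P = 1 := by simp

lemma E1 : ∫ x, x ∂P = 1/2 := by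
  have h := hasSum_P (fun x => x) measurable_id 1
    (fun x hx => abs_le.2 ⟨by linarith [hx.1], hx.2⟩)
  refine h.unique ?_
  have hterm : (fun n : ℕ => ((3:ℝ)/2)^(n+1) * ∫ x in J (n+1), x)
      = fun n : ℕ => (1/2:ℝ)^(n+1) - (5/12)*(1/6)^n := by
    funext n
    rw [J_succ, setInt_Icc (J_le n), int_id]
    have hB : (0:ℝ) < 3^n := pow3_pos n
    have e1 : ((3:ℝ)/2)^(n+1) = (3*3^n)/(2*2^n) := by rw [div_pow, pow_succ]; ring
    have e2 : ((1:ℝ)/2)^(n+1) = 1/(2*2^n) := by rw [div_pow, pow_succ]; ring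
    have e3 : ((1:ℝ)/6)^n = 1/(2^n*3^n) := by
      rw [div_pow, one_pow, show (6:ℝ)=2*3 by norm_num, mul_pow]
    have e5 : (3:ℝ)^(n+1) = 3*3^n := by rw [pow_succ]; ring
    have hA : (0:ℝ) < 2^n := by positivity
    rw [e5, e1, e2, e3]
    field_simp
    ring
  rw [hterm]
  have h2 := hs_half.sub (hs_sixth.mul_left (5/12))
  convert h2 using 1
  case e'_3 => rfl
  norm_num

lemma E2 : ∫ x, x^2 ∂P = 19/51 := by
  have h := hasSum_P (fun x => x^2) (measurable_id.pow_const 2) 1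
    (fun x hx => by rw [abs_of_nonneg (sq_nonneg x)]; nlinarith [hx.1, hx.2])
  refine h.unique ?_
  have hterm : (fun n : ℕ => ((3:ℝ)/2)^(n+1) * ∫ x in J (n+1), x^2)
      = fun n : ℕ => (1/2:ℝ)^(n+1) - (5/6)*(1/6)^n + (19/54)*(1/18)^n := by
    funext n
    rw [J_succ, setInt_Icc (J_le n), integral_pow]
    have hB : (0:ℝ) < 3^n := pow3_pos n
    have hA : (0:ℝ) < 2^n := by positivity
    have e1 : ((3:ℝ)/2)^(n+1) = (3*3^n)/(2*2^n) := by rw [div_pow, pow_succ]; ring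
    have e2 : ((1:ℝ)/2)^(n+1) = 1/(2*2^n) := by rw [div_pow, pow_succ]; ring
    have e3 : ((1:ℝ)/6)^n = 1/(2^n*3^n) := by
      rw [div_pow, one_pow, show (6:ℝ)=2*3 by norm_num, mul_pow]
    have e4 : ((1:ℝ)/18)^n = 1/(2^n*(3^n*3^n)) := by
      rw [div_pow, one_pow, show (18:ℝ)=2*(3*3) by norm_num, mul_pow, mul_pow]
    have e5 : (3:ℝ)^(n+1) = 3*3^n := by rw [pow_succ]; ring
    rw [e5, e1, e2, e3, e4]
    push_cast
    field_simp
    ring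
  rw [hterm]
  have h2 := (hs_half.sub (hs_sixth.mul_left (5/6))).add (hs_18.mul_left (19/54))
  convert h2 using 1
  case e'_3 => rfl
  norm_num

lemma hL1 (n : ℕ) : (2/3:ℝ) ≤ 1 - 1/3^(n+1) := by
  have h3 : (3:ℝ) ≤ 3^(n+1) := by simpa using pow3_mono (show 1 ≤ n+1 by omega)
  have : (1:ℝ)/3^(n+1) ≤ 1/3 := by
    rw [div_le_div_iff₀ (pow3_pos _) (by norm_num)]; linarith
  linarith

lemma Emin : ∫ x, min ((x - 1/6)^2) ((x - 5/6)^2) ∂P = 7/612 := by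
  have hmeas : Measurable (fun x : ℝ => min ((x - 1/6)^2) ((x - 5/6)^2)) :=
    ((measurable_id.sub_const _).pow_const 2).min ((measurable_id.sub_const _).pow_const 2)
  have hb : ∀ x ∈ Set.Icc (0:ℝ) 1, |min ((x - 1/6)^2) ((x - 5/6)^2)| ≤ 1 := by
    intro x hx
    rw [abs_of_nonneg (le_min (sq_nonneg _) (sq_nonneg _))]
    exact le_trans (min_le_left _ _) (by nlinarith [hx.1, hx.2])
  have h := hasSum_P _ hmeas 1 hb
  refine h.unique ?_
  -- value of term 0
  have t0 : ((3:ℝ)/2)^(0+1) * (∫ x in J (0+1), min ((x - 1/6)^2) ((x - 5/6)^2)) = 1/216 := by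
    have hcong : ∫ x in J 1, min ((x - 1/6)^2) ((x - 5/6)^2) = ∫ x in J 1, (x - 1/6)^2 := by
      apply setIntegral_congr_fun (by rw [J_succ]; exact measurableSet_Icc)
      intro x hx
      rw [J_succ] at hx
      have h1 := hx.1; have h2 := hx.2
      norm_num at h1 h2
      exact min_eq_left (by nlinarith)
    rw [hcong, J_succ, setInt_Icc (J_le 0), int_sq]
    norm_num
  -- terms n+1
  have tn : ∀ n : ℕ, ((3:ℝ)/2)^(n+1+1) * (∫ x in J (n+1+1), min ((x - 1/6)^2) ((x - 5/6)^2))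
      = (1/72)*(1/2)^(n+1) - (5/216)*(1/6)^n + (19/972)*(1/18)^n := by
    intro n
    have hcong : ∫ x in J (n+2), min ((x - 1/6)^2) ((x - 5/6)^2)
        = ∫ x in J (n+2), (x - 5/6)^2 := by
      apply setIntegral_congr_fun (by rw [J_succ]; exact measurableSet_Icc)
      intro x hx
      rw [J_succ] at hx
      have h1 := le_trans (hL1 n) hx.1
      exact min_eq_right (by nlinarith)
    rw [show n+1+1 = n+2 from rfl, hcong, J_succ, setInt_Icc (J_le (n+1)), int_sq]
    have hB : (0:ℝ) < 3^n := pow3_pos n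
    have hA : (0:ℝ) < 2^n := by positivity
    have e1 : ((3:ℝ)/2)^(n+2) = (9*3^n)/(4*2^n) := by rw [div_pow, pow_succ, pow_succ]; ring
    have e2 : ((1:ℝ)/2)^(n+1) = 1/(2*2^n) := by rw [div_pow, pow_succ]; ring
    have e3 : ((1:ℝ)/6)^n = 1/(2^n*3^n) := by
      rw [div_pow, one_pow, show (6:ℝ)=2*3 by norm_num, mul_pow]
    have e4 : ((1:ℝ)/18)^n = 1/(2^n*(3^n*3^n)) := by
      rw [div_pow, one_pow, show (18:ℝ)=2*(3*3) by norm_num, mul_pow, mul_pow]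
    have e5 : (3:ℝ)^(n+1) = 3*3^n := by rw [pow_succ]; ring
    have e6 : (3:ℝ)^(n+2) = 9*3^n := by rw [pow_succ, pow_succ]; ring
    rw [e6, e5, e1, e2, e3, e4]
    field_simp
    ring
  have h2 : HasSum (fun n : ℕ => ((3:ℝ)/2)^(n+1+1) * ∫ x in J (n+1+1), min ((x - 1/6)^2) ((x - 5/6)^2))
      (25/3672) := by
    rw [funext tn]
    have h3 := ((hs_half.mul_left (1/72)).sub (hs_sixth.mul_left (5/216))).add
      (hs_18.mul_left (19/972))
    convert h3 using 1
    case e'_3 => rfl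
    norm_num
  have h4 := (hasSum_nat_add_iff (f := fun n : ℕ =>
      ((3:ℝ)/2)^(n+1) * ∫ x in J (n+1), min ((x - 1/6)^2) ((x - 5/6)^2)) 1).mp h2
  rw [Finset.range_one, Finset.sum_singleton, t0] at h4
  convert h4 using 1
  case e'_3 => rfl
  norm_num

lemma Icc_inter_Iic' (a b c : ℝ) : Set.Icc a b ∩ Set.Iic c = Set.Icc a (min b c) := by
  ext x
  simp only [Set.mem_inter_iff, Set.mem_Icc, Set.mem_Iic, le_min_iff]
  tauto

lemma term_ind (g : ℝ → ℝ) (m : ℝ) (n : ℕ) :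
    ∫ x in J (n+1), (Set.indicator (Set.Iic m) g) x
      = ∫ x in Set.Icc (1-1/(3:ℝ)^n) (min (1-2/3^(n+1)) m), g x := by
  rw [J_succ, ← Icc_inter_Iic' , ← setIntegral_indicator measurableSet_Iic]

lemma term_ind_empty (g : ℝ → ℝ) {m : ℝ} (n : ℕ) (h : m < 1-1/(3:ℝ)^n) :
    ∫ x in J (n+1), (Set.indicator (Set.Iic m) g) x = 0 := by
  rw [term_ind, Set.Icc_eq_empty (by push_neg; exact lt_of_le_of_lt (min_le_right _ _) h),
    setIntegral_empty]

-- indicator measurability / bounds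
lemma meas_ind_one (m : ℝ) : Measurable (Set.indicator (Set.Iic m) (fun _ => (1:ℝ))) :=
  measurable_const.indicator measurableSet_Iic

lemma meas_ind_id (m : ℝ) : Measurable (Set.indicator (Set.Iic m) (fun y => y)) :=
  measurable_id.indicator measurableSet_Iic

lemma bound_ind_one (m : ℝ) : ∀ x ∈ Set.Icc (0:ℝ) 1,
    |Set.indicator (Set.Iic m) (fun _ => (1:ℝ)) x| ≤ 1 := by
  intro x hx
  rw [Set.indicator_apply]
  split_ifs <;> simp

lemma bound_ind_id (m : ℝ) : ∀ x ∈ Set.Icc (0:ℝ) 1,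
    |Set.indicator (Set.Iic m) (fun y => y) x| ≤ 1 := by
  intro x hx
  rw [Set.indicator_apply]
  split_ifs
  · rw [abs_of_nonneg hx.1]; exact hx.2
  · simp

lemma int_ind_one_P (m : ℝ) : Integrable (Set.indicator (Set.Iic m) (fun _ => (1:ℝ))) P :=
  integrable_P (meas_ind_one m) (bound_ind_one m)

lemma int_ind_id_P (m : ℝ) : Integrable (Set.indicator (Set.Iic m) (fun y => y)) P :=
  integrable_P (meas_ind_id m) (bound_ind_id m)

/-- p(m) for 0 < m ≤ 1/3 -/
lemma Ep_small {m : ℝ} (h0 : 0 ≤ m) (h1 : m ≤ 1/3) :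
    ∫ x, (Set.indicator (Set.Iic m) (fun _ => (1:ℝ))) x ∂P = 3*m/2 := by
  have h := hasSum_P _ (meas_ind_one m) 1 (bound_ind_one m)
  refine h.unique ?_
  have hs : HasSum (fun n : ℕ => ((3:ℝ)/2)^(n+1) * ∫ x in J (n+1),
      (Set.indicator (Set.Iic m) (fun _ => (1:ℝ))) x) (3*m/2) := by
    have hz : ∀ n : ℕ, n ≠ 0 → ((3:ℝ)/2)^(n+1) * ∫ x in J (n+1),
        (Set.indicator (Set.Iic m) (fun _ => (1:ℝ))) x = 0 := by
      intro n hn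
      obtain ⟨k, rfl⟩ : ∃ k, n = k + 1 := ⟨n-1, by omega⟩
      rw [term_ind_empty _ _ (lt_of_le_of_lt h1 (by linarith [hL1 k]))]
      ring
    have h00 : ((3:ℝ)/2)^(0+1) * ∫ x in J (0+1),
        (Set.indicator (Set.Iic m) (fun _ => (1:ℝ))) x = 3*m/2 := by
      rw [term_ind, show (1:ℝ)-1/(3:ℝ)^0 = 0 by norm_num,
        show (1:ℝ)-2/3^(0+1) = 1/3 by norm_num, min_eq_right (by linarith : m ≤ 1/3),
        setInt_Icc h0, int_one]
      ring
    have := hasSum_single (f := fun n : ℕ => ((3:ℝ)/2)^(n+1) * ∫ x in J (n+1),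
        (Set.indicator (Set.Iic m) (fun _ => (1:ℝ))) x) 0 hz
    exact h00 ▸ this
  exact hs

lemma EM_small {m : ℝ} (h0 : 0 ≤ m) (h1 : m ≤ 1/3) :
    ∫ x, (Set.indicator (Set.Iic m) (fun y => y)) x ∂P = 3*m^2/4 := by
  have h := hasSum_P _ (meas_ind_id m) 1 (bound_ind_id m)
  refine h.unique ?_
  have hz : ∀ n : ℕ, n ≠ 0 → ((3:ℝ)/2)^(n+1) * ∫ x in J (n+1),
      (Set.indicator (Set.Iic m) (fun y => y)) x = 0 := by
    intro n hn
    obtain ⟨k, rfl⟩ : ∃ k, n = k + 1 := ⟨n-1, by omega⟩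
    rw [term_ind_empty _ _ (lt_of_le_of_lt h1 (by linarith [hL1 k]))]
    ring
  have h00 : ((3:ℝ)/2)^(0+1) * ∫ x in J (0+1),
      (Set.indicator (Set.Iic m) (fun y => y)) x = 3*m^2/4 := by
    rw [term_ind, show (1:ℝ)-1/(3:ℝ)^0 = 0 by norm_num,
      show (1:ℝ)-2/3^(0+1) = 1/3 by norm_num, min_eq_right (by linarith : m ≤ 1/3),
      setInt_Icc h0, int_id]
    ring
  have := hasSum_single (f := fun n : ℕ => ((3:ℝ)/2)^(n+1) * ∫ x in J (n+1),
      (Set.indicator (Set.Iic m) (fun y => y)) x) 0 hz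
  exact h00 ▸ this

/-- p(m) for 1/3 ≤ m < 2/3 -/
lemma Ep_mid {m : ℝ} (h0 : 1/3 ≤ m) (h1 : m < 2/3) :
    ∫ x, (Set.indicator (Set.Iic m) (fun _ => (1:ℝ))) x ∂P = 1/2 := by
  have h := hasSum_P _ (meas_ind_one m) 1 (bound_ind_one m)
  refine h.unique ?_
  have hz : ∀ n : ℕ, n ≠ 0 → ((3:ℝ)/2)^(n+1) * ∫ x in J (n+1),
      (Set.indicator (Set.Iic m) (fun _ => (1:ℝ))) x = 0 := by
    intro n hn
    obtain ⟨k, rfl⟩ : ∃ k, n = k + 1 := ⟨n-1, by omega⟩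
    rw [term_ind_empty _ _ (lt_of_lt_of_le h1 (hL1 k))]
    ring
  have h00 : ((3:ℝ)/2)^(0+1) * ∫ x in J (0+1),
      (Set.indicator (Set.Iic m) (fun _ => (1:ℝ))) x = 1/2 := by
    rw [term_ind, show (1:ℝ)-1/(3:ℝ)^0 = 0 by norm_num,
      show (1:ℝ)-2/3^(0+1) = 1/3 by norm_num, min_eq_left (by linarith : (1/3:ℝ) ≤ m),
      setInt_Icc (by norm_num), int_one]
    ring
  have := hasSum_single (f := fun n : ℕ => ((3:ℝ)/2)^(n+1) * ∫ x in J (n+1),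
      (Set.indicator (Set.Iic m) (fun _ => (1:ℝ))) x) 0 hz
  exact h00 ▸ this

lemma EM_mid {m : ℝ} (h0 : 1/3 ≤ m) (h1 : m < 2/3) :
    ∫ x, (Set.indicator (Set.Iic m) (fun y => y)) x ∂P = 1/12 := by
  have h := hasSum_P _ (meas_ind_id m) 1 (bound_ind_id m)
  refine h.unique ?_
  have hz : ∀ n : ℕ, n ≠ 0 → ((3:ℝ)/2)^(n+1) * ∫ x in J (n+1),
      (Set.indicator (Set.Iic m) (fun y => y)) x = 0 := by
    intro n hn
    obtain ⟨k, rfl⟩ : ∃ k, n = k + 1 := ⟨n-1, by omega⟩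
    rw [term_ind_empty _ _ (lt_of_lt_of_le h1 (hL1 k))]
    ring
  have h00 : ((3:ℝ)/2)^(0+1) * ∫ x in J (0+1),
      (Set.indicator (Set.Iic m) (fun y => y)) x = 1/12 := by
    rw [term_ind, show (1:ℝ)-1/(3:ℝ)^0 = 0 by norm_num,
      show (1:ℝ)-2/3^(0+1) = 1/3 by norm_num, min_eq_left (by linarith : (1/3:ℝ) ≤ m),
      setInt_Icc (by norm_num), int_id]
    ring
  have := hasSum_single (f := fun n : ℕ => ((3:ℝ)/2)^(n+1) * ∫ x in J (n+1),
      (Set.indicator (Set.Iic m) (fun y => y)) x) 0 hz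
  exact h00 ▸ this

lemma Ep_lt_one {m : ℝ} (hm : m < 1) :
    ∫ x, (Set.indicator (Set.Iic m) (fun _ => (1:ℝ))) x ∂P < 1 := by
  obtain ⟨N, hN⟩ := exists_pow_lt_of_lt_one (show (0:ℝ) < 1 - m by linarith)
    (show (1/3:ℝ) < 1 by norm_num)
  have hNm : m < 1 - 1/(3:ℝ)^N := by
    have : ((1:ℝ)/3)^N = 1/3^N := by rw [div_pow, one_pow]
    linarith [this ▸ hN]
  have h := hasSum_P _ (meas_ind_one m) 1 (bound_ind_one m)
  have he : HasSum (fun n : ℕ => ((1:ℝ)/2)^(n+1) - (if n = N then ((1:ℝ)/2)^(N+1) else 0))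
      (1 - (1/2)^(N+1)) := hs_half.sub (hasSum_ite_eq N _)
  have hle : ∫ x, (Set.indicator (Set.Iic m) (fun _ => (1:ℝ))) x ∂P ≤ 1 - (1/2)^(N+1) := by
    refine hasSum_le ?_ h he
    intro n
    by_cases hn : n = N
    · subst hn
      rw [term_ind_empty _ _ hNm]
      simp
    · simp only [hn, if_false, sub_zero]
      rw [term_ind]
      have hvol : ∫ x in Set.Icc (1-1/(3:ℝ)^n) (min (1-2/3^(n+1)) m), (1:ℝ)
          ≤ 1/3^(n+1) := by
        rcases le_or_gt (1-1/(3:ℝ)^n) (min (1-2/3^(n+1)) m) with hc | hc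
        · rw [setInt_Icc hc, int_one]
          have h2 : min (1-2/(3:ℝ)^(n+1)) m ≤ 1-2/3^(n+1) := min_le_left _ _
          have := pow3_pos n
          have := pow3_pos (n+1)
          have e : (1:ℝ) - 2/3^(n+1) - (1-1/3^n) = 1/3^(n+1) := by
            rw [pow_succ]
            field_simp
            ring
          linarith
        · rw [Set.Icc_eq_empty (not_le.2 hc), setIntegral_empty]
          positivity
      calc ((3:ℝ)/2)^(n+1) * ∫ x in Set.Icc (1-1/(3:ℝ)^n) (min (1-2/3^(n+1)) m), (1:ℝ)
          ≤ ((3:ℝ)/2)^(n+1) * (1/3^(n+1)) := by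
            apply mul_le_mul_of_nonneg_left hvol (by positivity)
        _ = (1/2)^(n+1) := by
            rw [show (1:ℝ)/3^(n+1) = (1/3)^(n+1) by rw [div_pow, one_pow], ← mul_pow]
            norm_num
  have : (0:ℝ) < (1/2)^(N+1) := by positivity
  linarith

lemma alg_main {p M a₁ a₂ : ℝ} (hp : 0 < p) (hp1 : p < 1)
    (hh : M^2/p + (1/2 - M)^2/(1-p) ≤ 13/36) :
    7/612 ≤ 19/51 - a₂ + a₂^2 + (a₂ - a₁)*(2*M - (a₁+a₂)*p) := by
  have hq : (0:ℝ) < 1 - p := by linarith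
  have key : -a₂ + a₂^2 + (a₂-a₁)*(2*M - (a₁+a₂)*p)
      = -(M^2/p) - ((1/2-M)^2/(1-p)) + (p*a₁ - M)^2/p + ((1-p)*a₂ - (1/2 - M))^2/(1-p) := by
    field_simp
    ring
  have t1 : (p*a₁ - M)^2/p ≥ 0 := by positivity
  have t2 : ((1-p)*a₂ - (1/2-M))^2/(1-p) ≥ 0 := div_nonneg (sq_nonneg _) (by linarith)
  nlinarith [key, hh, t1, t2]

lemma hb1 {p : ℝ} (h0 : 0 < p) (h1 : p ≤ 1/2) :
    (p^2/3)^2/p + (1/2 - p^2/3)^2/(1-p) ≤ 13/36 := by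
  have hq : (0:ℝ) < 1 - p := by linarith
  rw [div_add_div _ _ (ne_of_gt h0) (ne_of_gt hq), div_le_iff₀ (by positivity)]
  nlinarith [sq_nonneg p, sq_nonneg (p - 1/2), mul_pos h0 h0, mul_pos (mul_pos h0 h0) h0,
    mul_nonneg (mul_nonneg h0.le h0.le) hq.le, sq_nonneg (p*(p-1/2))]

lemma hb3 {p M : ℝ} (hp : 1/2 ≤ p) (hp45 : p ≤ 4/5) (hM1 : 2*p/3 - 1/4 ≤ M) (hM2 : M ≤ p/2) :
    M^2/p + (1/2 - M)^2/(1-p) ≤ 13/36 := by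
  have h0 : (0:ℝ) < p := by linarith
  have hq : (0:ℝ) < 1 - p := by linarith
  rw [div_add_div _ _ (ne_of_gt h0) (ne_of_gt hq), div_le_iff₀ (by positivity)]
  nlinarith [mul_nonneg (sub_nonneg.2 hM1) (sub_nonneg.2 (show M + (2*p/3 - 1/4) ≤ p by linarith)),
    mul_nonneg (sub_nonneg.2 hp) (sub_nonneg.2 hp45)]

lemma hb4 {p M : ℝ} (hp : 4/5 ≤ p) (hp1 : p < 1) (hM1 : p - 1/2 ≤ M) (hM2 : M ≤ p/2) :
    M^2/p + (1/2 - M)^2/(1-p) ≤ 13/36 := by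
  have h0 : (0:ℝ) < p := by linarith
  have hq : (0:ℝ) < 1 - p := by linarith
  rw [div_add_div _ _ (ne_of_gt h0) (ne_of_gt hq), div_le_iff₀ (by positivity)]
  nlinarith [mul_nonneg (sub_nonneg.2 hM1) (sub_nonneg.2 (show M + (p - 1/2) ≤ p by linarith)),
    mul_nonneg (sub_nonneg.2 hp) hq.le]

lemma int_sq_P (c : ℝ) : Integrable (fun x => (x - c)^2) P := by
  apply integrable_P (g := fun x => (x - c)^2) (by fun_prop) (C := (1+|c|)^2)
  intro x hx
  rw [abs_of_nonneg (sq_nonneg _)]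
  nlinarith [abs_nonneg c, neg_abs_le c, le_abs_self c, hx.1, hx.2]

lemma int_x_P : Integrable (fun x : ℝ => x) P :=
  integrable_P measurable_id (C := 1) (fun x hx => abs_le.2 ⟨by linarith [hx.1], hx.2⟩)

lemma int_x2_P : Integrable (fun x : ℝ => x^2) P :=
  integrable_P (measurable_id.pow_const 2) (C := 1)
    (fun x hx => by rw [abs_of_nonneg (sq_nonneg _)]; nlinarith [hx.1, hx.2])

lemma E_sq (c : ℝ) : ∫ x, (x - c)^2 ∂P = 19/51 - c + c^2 := by
  have hfun : (fun x : ℝ => (x - c)^2) = fun x => (x^2 - (2*c)*x) + c^2 := by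
    funext x; ring
  have h1 : Integrable (fun x : ℝ => (2*c)*x) P := int_x_P.const_mul (2*c)
  have h2 : Integrable (fun x : ℝ => x^2 - (2*c)*x) P := int_x2_P.sub h1
  rw [hfun, integral_add h2 (integrable_const _), integral_sub int_x2_P h1,
    integral_const_mul, E2, E1, integral_const]
  simp [measure_univ]
  ring

lemma int_ind_sub_P (m c : ℝ) : Integrable (Set.indicator (Set.Iic m) (fun y => y - c)) P := by
  apply integrable_P (g := Set.indicator (Set.Iic m) (fun y => y - c))
    ((measurable_id'.sub_const c).indicator measurableSet_Iic) (C := 1 + |c|)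
  intro x hx
  rw [Set.indicator_apply]
  split_ifs
  · rw [abs_le]
    constructor
    · have := le_abs_self c; linarith [hx.1]
    · have := neg_abs_le c; linarith [hx.2]
  · rw [abs_zero]
    positivity

lemma E_ind_lin (m c : ℝ) :
    ∫ x, (Set.indicator (Set.Iic m) (fun y => y - c)) x ∂P
      = (∫ x, (Set.indicator (Set.Iic m) (fun y => y)) x ∂P)
        - c * ∫ x, (Set.indicator (Set.Iic m) (fun _ => (1:ℝ))) x ∂P := by
  have hfun : (fun x => Set.indicator (Set.Iic m) (fun y => y - c) x)
      = fun x => Set.indicator (Set.Iic m) (fun y => y) x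
          - c * Set.indicator (Set.Iic m) (fun _ => (1:ℝ)) x := by
    funext x
    simp only [Set.indicator_apply]
    split_ifs <;> ring
  have h1 : Integrable (fun x => c * Set.indicator (Set.Iic m) (fun _ => (1:ℝ)) x) P :=
    (int_ind_one_P m).const_mul c
  rw [hfun, integral_sub (int_ind_id_P m) h1, integral_const_mul]

set_option maxHeartbeats 1000000 in
theorem key_lb (a₁ a₂ : ℝ) (h12 : a₁ ≤ a₂) :
    7/612 ≤ ∫ x, min ((x - a₁) ^ 2) ((x - a₂) ^ 2) ∂P := by
  set m : ℝ := (a₁ + a₂)/2 with hm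
  by_cases hm0 : m ≤ 0
  · -- all mass to the right of midpoint
    have hae : ∫ x, min ((x - a₁) ^ 2) ((x - a₂) ^ 2) ∂P = ∫ x, (x - a₂)^2 ∂P := by
      apply integral_congr_ae
      filter_upwards [P_ae_U] with x hx
      have hx0 : 0 ≤ x := by rcases hx with h | h; exacts [h.1, by linarith [h.1]]
      exact min_eq_right (by nlinarith)
    rw [hae, E_sq]
    nlinarith [sq_nonneg (a₂ - 1/2)]
  by_cases hm1 : 1 ≤ m
  · have hae : ∫ x, min ((x - a₁) ^ 2) ((x - a₂) ^ 2) ∂P = ∫ x, (x - a₁)^2 ∂P := by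
      apply integral_congr_ae
      filter_upwards [P_ae_U] with x hx
      have hx1 : x ≤ 1 := by rcases hx with h | h; exacts [by linarith [h.2], h.2]
      exact min_eq_left (by nlinarith)
    rw [hae, E_sq]
    nlinarith [sq_nonneg (a₁ - 1/2)]
  push_neg at hm0 hm1
  -- the splitting identity
  set pm : ℝ := ∫ x, (Set.indicator (Set.Iic m) (fun _ => (1:ℝ))) x ∂P with hpm
  set Mm : ℝ := ∫ x, (Set.indicator (Set.Iic m) (fun y => y)) x ∂P with hMm
  have hsplit : ∫ x, min ((x - a₁) ^ 2) ((x - a₂) ^ 2) ∂P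
      = 19/51 - a₂ + a₂^2 + (a₂ - a₁)*(2*Mm - (a₁+a₂)*pm) := by
    have hfun : (fun x => min ((x - a₁) ^ 2) ((x - a₂) ^ 2))
        = fun x => (x - a₂)^2 + ((2*(a₂ - a₁)) * Set.indicator (Set.Iic m) (fun y => y) x
            + (-((a₂ - a₁)*(a₁+a₂))) * Set.indicator (Set.Iic m) (fun _ => (1:ℝ)) x) := by
      funext x
      simp only [Set.indicator_apply, Set.mem_Iic]
      split_ifs with hx
      · rw [min_eq_left (by nlinarith)]; ring
      · push_neg at hx
        rw [min_eq_right (by nlinarith)]; ring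
    have h1 : Integrable (fun x => (2*(a₂ - a₁)) * Set.indicator (Set.Iic m) (fun y => y) x) P :=
      (int_ind_id_P m).const_mul _
    have h2 : Integrable (fun x =>
        (-((a₂ - a₁)*(a₁+a₂))) * Set.indicator (Set.Iic m) (fun _ => (1:ℝ)) x) P :=
      (int_ind_one_P m).const_mul _
    have h12' : Integrable (fun x => (2*(a₂ - a₁)) * Set.indicator (Set.Iic m) (fun y => y) x
        + (-((a₂ - a₁)*(a₁+a₂))) * Set.indicator (Set.Iic m) (fun _ => (1:ℝ)) x) P := h1.add h2
    rw [hfun, integral_add (int_sq_P a₂) h12', integral_add h1 h2,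
      integral_const_mul, integral_const_mul, E_sq]
    rw [← hpm, ← hMm]
    ring
  rw [hsplit]
  by_cases hm13 : m ≤ 1/3
  · -- case i
    have hp : pm = 3*m/2 := Ep_small hm0.le hm13
    have hM : Mm = 3*m^2/4 := EM_small hm0.le hm13
    have hMp : Mm = (3*m/2)^2/3 := by rw [hM]; ring
    refine alg_main (p := pm) (M := Mm) ?_ ?_ ?_
    · rw [hp]; linarith
    · rw [hp]; linarith
    · rw [hp, hM]
      have hh := hb1 (p := 3*m/2) (by linarith) (by linarith)
      rw [show (3*m/2)^2/3 = 3*m^2/4 from by ring] at hh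
      exact hh
  push_neg at hm13
  by_cases hm23 : m < 2/3
  · -- case ii
    have hp : pm = 1/2 := Ep_mid (by linarith) hm23
    have hM : Mm = 1/12 := EM_mid (by linarith) hm23
    refine alg_main (p := pm) (M := Mm) ?_ ?_ ?_
    · rw [hp]; norm_num
    · rw [hp]; norm_num
    · rw [hp, hM]; norm_num
  push_neg at hm23
  -- case iii : 2/3 ≤ m < 1
  have hp_lo : 1/2 ≤ pm := by
    have h12' : ∫ x, (Set.indicator (Set.Iic (1/2:ℝ)) (fun _ => (1:ℝ))) x ∂P = 1/2 :=
      Ep_mid (by norm_num) (by norm_num)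
    rw [← h12', hpm]
    apply integral_mono (int_ind_one_P (1/2)) (int_ind_one_P m)
    exact Set.indicator_le_indicator_of_subset (Set.Iic_subset_Iic.2 (by linarith))
      (fun _ => zero_le_one)
  have hp_hi : pm < 1 := Ep_lt_one hm1
  -- Mm ≤ pm/2
  have hM_le : Mm ≤ pm/2 := by
    have hint_half : ∫ x, ((x:ℝ) - 1/2) ∂P = 0 := by
      rw [integral_sub int_x_P (integrable_const _), E1, integral_const]
      simp [measure_univ]
    have hIoi : Integrable (Set.indicator (Set.Ioi m) (fun y => y - 1/2)) P := by
      apply integrable_P ((measurable_id'.sub_const _).indicator measurableSet_Ioi) (C := 2)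
      intro x hx
      rw [Set.indicator_apply]
      split_ifs
      · rw [abs_le]; constructor <;> nlinarith [hx.1, hx.2]
      · simp
    have hIoi_nonneg : 0 ≤ ∫ x, (Set.indicator (Set.Ioi m) (fun y => y - 1/2)) x ∂P := by
      apply integral_nonneg
      intro x
      simp only [Pi.zero_apply, Set.indicator_apply]
      split_ifs with hx
      · rw [Set.mem_Ioi] at hx; linarith
      · exact le_rfl
    have hfun : (fun x => Set.indicator (Set.Iic m) (fun y => y - 1/2) x)
        = fun x => (x - 1/2) - Set.indicator (Set.Ioi m) (fun y => y - 1/2) x := by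
      funext x
      simp only [Set.indicator_apply, Set.mem_Iic, Set.mem_Ioi]
      rcases le_or_gt x m with h | h
      · rw [if_pos h, if_neg (not_lt.2 h)]; ring
      · rw [if_neg (not_le.2 h), if_pos h]; ring
    have := E_ind_lin m (1/2)
    rw [hfun] at this
    rw [integral_sub (integrable_P (measurable_id'.sub_const _) (C := 2)
        (fun x hx => by rw [abs_le]; constructor <;> nlinarith [hx.1, hx.2])) hIoi,
      hint_half] at this
    rw [← hMm, ← hpm] at this
    linarith
  rcases le_or_gt pm (4/5) with hp45 | hp45
  · -- use tangent at slope 2/3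
    have hMge : 2*pm/3 - 1/4 ≤ Mm := by
      have hlhs := E_ind_lin m (2/3)
      have hrhs := E_ind_lin (1/2) (2/3)
      rw [Ep_mid (by norm_num) (by norm_num), EM_mid (by norm_num) (by norm_num)] at hrhs
      have hmono : ∫ x, (Set.indicator (Set.Iic (1/2:ℝ)) (fun y => y - 2/3)) x ∂P
          ≤ ∫ x, (Set.indicator (Set.Iic m) (fun y => y - 2/3)) x ∂P := by
        apply integral_mono_ae (int_ind_sub_P _ _) (int_ind_sub_P _ _)
        filter_upwards [P_ae_U] with x hx
        simp only [Set.indicator_apply, Set.mem_Iic]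
        rcases hx with h | h
        · rw [if_pos (by linarith [h.2] : x ≤ (1/2:ℝ)), if_pos (by linarith [h.2] : x ≤ m)]
        · rw [if_neg (by push_neg; linarith [h.1] : ¬ x ≤ (1/2:ℝ))]
          split_ifs with h2
          · linarith [h.1]
          · exact le_rfl
      rw [hlhs, hrhs] at hmono
      rw [← hMm, ← hpm] at hmono
      linarith
    exact alg_main (by linarith) hp_hi (hb3 hp_lo hp45 hMge hM_le)
  · -- endpoint bound
    have hMge : pm - 1/2 ≤ Mm := by
      have hlhs := E_ind_lin m 1
      have hint1 : ∫ x, ((x:ℝ) - 1) ∂P = -(1/2) := by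
        rw [integral_sub int_x_P (integrable_const _), E1, integral_const]
        simp [measure_univ]
        norm_num
      have hmono : ∫ x, ((x:ℝ) - 1) ∂P
          ≤ ∫ x, (Set.indicator (Set.Iic m) (fun y => y - 1)) x ∂P := by
        apply integral_mono_ae (integrable_P (measurable_id'.sub_const _) (C := 2)
          (fun x hx => by rw [abs_le]; constructor <;> nlinarith [hx.1, hx.2]))
          (int_ind_sub_P _ _)
        filter_upwards [P_ae_U] with x hx
        have hx1 : x ≤ 1 := by rcases hx with h | h; exacts [by linarith [h.2], h.2]
        simp only [Set.indicator_apply, Set.mem_Iic]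
        split_ifs with h2
        · exact le_rfl
        · linarith
      rw [hlhs, hint1, ← hMm, ← hpm] at hmono
      linarith
    exact alg_main (by linarith) hp_hi (hb4 hp45.le hp_hi hMge hM_le)

theorem stmt_6 :
    (∫ x, min ((x - 1 / 6) ^ 2) ((x - 5 / 6) ^ 2) ∂P) = 7 / 612 ∧
    ∀ a₁ a₂ : ℝ, 7 / 612 ≤ ∫ x, min ((x - a₁) ^ 2) ((x - a₂) ^ 2) ∂P := by
  constructor
  · exact Emin
  · intro a₁ a₂
    rcases le_total a₁ a₂ with h | h
    · exact key_lb a₁ a₂ h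
    · have := key_lb a₂ a₁ h
      rw [show (fun x => min ((x - a₁) ^ 2) ((x - a₂) ^ 2))
          = (fun x => min ((x - a₂) ^ 2) ((x - a₁) ^ 2)) from funext fun x => min_comm _ _]
      exact this
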